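/- Let d be real with 0 < d < 1/2 and let η_j = Γ(j + d) / (Γ(j + 1) Γ(d)) be the fractional differencing coefficients. Let ψ : ℕ → ℝ satisfy ∑_{j=0}^∞ |ψ_j| (j + 1)^(1-d) < ∞ (in particular ψ is absolutely summable and ψ_j / j^(d-1) → 0). Define the impulse response coefficients R_j = ∑_{i=0}^{j} ψ_i η_{j-i}. Then R_j · Γ(d) · j^(1-d) → ∑_{i=0}^∞ ψ_i as j → ∞; that is, R_j ∼ (j^(d-1) / Γ(d)) ∑_{i=0}^∞ ψ_i. -/

import Mathlib

open Real Filter Finset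

private lemma ratio_lower {d : ℝ} (hd1 : 0 < d) (hd2 : d < 1) (k : ℕ) :
    ((k : ℝ) + d) ^ (d - 1) ≤ Real.Gamma ((k : ℝ) + d) / Real.Gamma ((k : ℝ) + 1) := by
  have hkd : (0:ℝ) < (k:ℝ) + d := by positivity
  have hG1 : 0 < Real.Gamma ((k:ℝ)+1) := Real.Gamma_pos_of_pos (by positivity)
  have hGd : 0 < Real.Gamma ((k:ℝ)+d) := Real.Gamma_pos_of_pos hkd
  have key : Real.Gamma ((k:ℝ)+1) ≤ Real.Gamma ((k:ℝ)+d) * ((k:ℝ)+d) ^ (1-d) := by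
    have h := Real.Gamma_mul_add_mul_le_rpow_Gamma_mul_rpow_Gamma (s := (k:ℝ)+d)
      (t := (k:ℝ)+d+1) (a := d) (b := 1-d) hkd (by positivity) hd1 (by linarith) (by ring)
    have e1 : d * ((k:ℝ)+d) + (1-d) * ((k:ℝ)+d+1) = (k:ℝ)+1 := by ring
    rw [e1, Real.Gamma_add_one hkd.ne'] at h
    calc Real.Gamma ((k:ℝ)+1)
        ≤ Real.Gamma ((k:ℝ)+d) ^ d * (((k:ℝ)+d) * Real.Gamma ((k:ℝ)+d)) ^ (1-d) := h
      _ = ((k:ℝ)+d) ^ (1-d) *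
          (Real.Gamma ((k:ℝ)+d) ^ d * Real.Gamma ((k:ℝ)+d) ^ (1-d)) := by
          rw [Real.mul_rpow hkd.le hGd.le]; ring
      _ = Real.Gamma ((k:ℝ)+d) * ((k:ℝ)+d) ^ (1-d) := by
          rw [← Real.rpow_add hGd]; norm_num [mul_comm]
  rw [le_div_iff₀ hG1]
  calc ((k:ℝ)+d)^(d-1) * Real.Gamma ((k:ℝ)+1)
      ≤ ((k:ℝ)+d)^(d-1) * (Real.Gamma ((k:ℝ)+d) * ((k:ℝ)+d)^(1-d)) :=
        mul_le_mul_of_nonneg_left key (Real.rpow_nonneg hkd.le _)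
    _ = Real.Gamma ((k:ℝ)+d) * (((k:ℝ)+d)^(d-1) * ((k:ℝ)+d)^(1-d)) := by ring
    _ = Real.Gamma ((k:ℝ)+d) := by rw [← Real.rpow_add hkd]; norm_num

private lemma ratio_upper {d : ℝ} (hd1 : 0 < d) (hd2 : d < 1) {k : ℕ} (hk : 1 ≤ k) :
    Real.Gamma ((k : ℝ) + d) / Real.Gamma ((k : ℝ) + 1) ≤ (k : ℝ) ^ (d - 1) := by
  have hk0 : (0:ℝ) < (k:ℝ) := by exact_mod_cast hk
  have hG1 : 0 < Real.Gamma ((k:ℝ)+1) := Real.Gamma_pos_of_pos (by positivity)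
  have hGk : 0 < Real.Gamma (k:ℝ) := Real.Gamma_pos_of_pos hk0
  have h := Real.Gamma_mul_add_mul_le_rpow_Gamma_mul_rpow_Gamma (s := (k:ℝ))
    (t := (k:ℝ)+1) (a := 1-d) (b := d) hk0 (by positivity) (by linarith) hd1 (by ring)
  have e1 : (1-d) * (k:ℝ) + d * ((k:ℝ)+1) = (k:ℝ)+d := by ring
  rw [e1, Real.Gamma_add_one hk0.ne'] at h
  have key : Real.Gamma ((k:ℝ)+d) ≤ Real.Gamma (k:ℝ) * (k:ℝ) ^ d := by
    calc Real.Gamma ((k:ℝ)+d)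
        ≤ Real.Gamma (k:ℝ) ^ (1-d) * ((k:ℝ) * Real.Gamma (k:ℝ)) ^ d := h
      _ = (k:ℝ) ^ d * (Real.Gamma (k:ℝ) ^ (1-d) * Real.Gamma (k:ℝ) ^ d) := by
          rw [Real.mul_rpow hk0.le hGk.le]; ring
      _ = Real.Gamma (k:ℝ) * (k:ℝ) ^ d := by
          rw [← Real.rpow_add hGk]; norm_num [mul_comm]
  rw [div_le_iff₀ hG1, Real.Gamma_add_one hk0.ne']
  calc Real.Gamma ((k:ℝ)+d) ≤ Real.Gamma (k:ℝ) * (k:ℝ) ^ d := key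
    _ = (k:ℝ)^(d-1) * ((k:ℝ) * Real.Gamma (k:ℝ)) := by
        rw [show d = (d-1) + 1 by ring, Real.rpow_add hk0, Real.rpow_one]; ring

private lemma aux_tendsto (c p : ℝ) :
    Tendsto (fun j : ℕ => (((j:ℝ) - c)/(j:ℝ)) ^ p) atTop (nhds 1) := by
  have h1 : Tendsto (fun j : ℕ => 1 - c/(j:ℝ)) atTop (nhds 1) := by
    have := (tendsto_const_nhds (x := c) (f := atTop (α := ℕ))).div_atTop
      tendsto_natCast_atTop_atTop
    simpa using (tendsto_const_nhds (x := (1:ℝ))).sub this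
  have h2 : Tendsto (fun j : ℕ => (1 - c/(j:ℝ)) ^ p) atTop (nhds 1) := by
    have hc : ContinuousAt (fun x : ℝ => x ^ p) 1 :=
      Real.continuousAt_rpow_const 1 p (Or.inl one_ne_zero)
    simpa [Function.comp_def] using hc.tendsto.comp h1
  refine h2.congr' ?_
  filter_upwards [eventually_ge_atTop 1] with j hj
  have hj0 : ((j:ℝ)) ≠ 0 := by positivity
  rw [sub_div, div_self hj0]

/-- for `0 < d < 1/2`, `η_j = Γ(j+d)/(Γ(j+1)Γ(d))`, and `ψ` with
`∑ |ψ_j|(j+1)^(1-d) < ∞`, the impulse response coefficients `R_j = ∑_{i=0}^j ψ_i η_{j-i}`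
satisfy `R_j · Γ(d) · j^(1-d) → ∑_{i=0}^∞ ψ_i`, i.e. `R_j ∼ (j^(d-1)/Γ(d)) ∑ ψ_i`. -/
theorem impulse_response_asymptotics (d : ℝ) (hd1 : 0 < d) (hd2 : d < 1/2) (ψ : ℕ → ℝ)
    (hψ : Summable (fun j : ℕ => |ψ j| * ((j : ℝ) + 1) ^ (1 - d))) :
    Tendsto (fun j : ℕ =>
        (∑ i ∈ Finset.range (j + 1),
            ψ i * (Real.Gamma (((j - i : ℕ) : ℝ) + d) /
              (Real.Gamma (((j - i : ℕ) : ℝ) + 1) * Real.Gamma d))) *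
          Real.Gamma d * (j : ℝ) ^ (1 - d))
      atTop (nhds (∑' i, ψ i)) := by
  have hd2' : d < 1 := by linarith
  have hGd : 0 < Real.Gamma d := Real.Gamma_pos_of_pos hd1
  set a : ℕ → ℝ := fun k => Real.Gamma ((k:ℝ) + d) / Real.Gamma ((k:ℝ) + 1) with ha
  have ha_pos : ∀ k, 0 < a k := fun k =>
    div_pos (Real.Gamma_pos_of_pos (by positivity)) (Real.Gamma_pos_of_pos (by positivity))
  -- uniform bound
  set C : ℝ := max 2 (Real.Gamma d) with hC
  have hbd : ∀ k : ℕ, a k * ((k:ℝ) + 1) ^ (1 - d) ≤ C := by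
    intro k
    rcases Nat.eq_zero_or_pos k with rfl | hk
    · simp only [ha, Nat.cast_zero, zero_add, Real.Gamma_one, div_one, Real.one_rpow, mul_one]
      exact le_max_right _ _
    · have hk0 : (0:ℝ) < (k:ℝ) := by exact_mod_cast hk
      have h1 : a k * ((k:ℝ)+1) ^ (1-d) ≤ (k:ℝ)^(d-1) * ((k:ℝ)+1)^(1-d) :=
        mul_le_mul_of_nonneg_right (ratio_upper hd1 hd2' hk) (Real.rpow_nonneg (by positivity) _)
      have h2 : (k:ℝ)^(d-1) * ((k:ℝ)+1)^(1-d) = (((k:ℝ)+1)/(k:ℝ))^(1-d) := by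
        rw [Real.div_rpow (by positivity) hk0.le, div_eq_mul_inv,
          ← Real.rpow_neg hk0.le, show -(1-d) = d-1 by ring, mul_comm]
      have h3 : (((k:ℝ)+1)/(k:ℝ))^(1-d) ≤ (2:ℝ)^(1-d) := by
        apply Real.rpow_le_rpow (by positivity) _ (by linarith)
        rw [div_le_iff₀ hk0]
        have : (1:ℝ) ≤ (k:ℝ) := by exact_mod_cast hk
        linarith
      have h4 : (2:ℝ)^(1-d) ≤ 2 := by
        calc (2:ℝ)^(1-d) ≤ (2:ℝ)^(1:ℝ) :=
          Real.rpow_le_rpow_of_exponent_le one_le_two (by linarith)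
        _ = 2 := Real.rpow_one 2
      calc a k * ((k:ℝ)+1)^(1-d) ≤ (2:ℝ)^(1-d) := by rw [h2] at h1; linarith
        _ ≤ 2 := h4
        _ ≤ C := le_max_left _ _
  -- pointwise limits
  have hpt : ∀ i : ℕ, Tendsto (fun j : ℕ => a (j - i) * (j:ℝ) ^ (1 - d)) atTop (nhds 1) := by
    intro i
    refine tendsto_of_tendsto_of_tendsto_of_le_of_le' (aux_tendsto ((i:ℝ) - d) (d-1))
      (aux_tendsto (i:ℝ) (d-1)) ?_ ?_
    · filter_upwards [eventually_ge_atTop (i+1)] with j hj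
      have hij : i ≤ j := by omega
      have hj0 : (0:ℝ) < (j:ℝ) := by exact_mod_cast (by omega : 0 < j)
      have hcast : ((j - i : ℕ) : ℝ) = (j:ℝ) - (i:ℝ) := by
        rw [Nat.cast_sub hij]
      have hlow := ratio_lower hd1 hd2' (j - i)
      have hkd : (0:ℝ) < ((j-i:ℕ):ℝ) + d :=
        add_pos_of_nonneg_of_pos (Nat.cast_nonneg _) hd1
      have h1 : (((j:ℝ) - ((i:ℝ) - d))/(j:ℝ))^(d-1)
          = (((j-i:ℕ):ℝ) + d)^(d-1) * (j:ℝ)^(1-d) := by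
        rw [Real.div_rpow (by rw [hcast] at hkd; linarith) hj0.le, div_eq_mul_inv,
          ← Real.rpow_neg hj0.le, show -(d-1) = 1-d by ring, hcast]
        ring_nf
      rw [h1]
      exact mul_le_mul_of_nonneg_right hlow (Real.rpow_nonneg hj0.le _)
    · filter_upwards [eventually_ge_atTop (i+1)] with j hj
      have hij1 : 1 ≤ j - i := by omega
      have hij : i ≤ j := by omega
      have hj0 : (0:ℝ) < (j:ℝ) := by exact_mod_cast (by omega : 0 < j)
      have hk0 : (0:ℝ) < ((j-i:ℕ):ℝ) := by exact_mod_cast hij1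
      have hcast : ((j - i : ℕ) : ℝ) = (j:ℝ) - (i:ℝ) := by rw [Nat.cast_sub hij]
      have hup := ratio_upper hd1 hd2' hij1
      have h1 : (((j:ℝ) - (i:ℝ))/(j:ℝ))^(d-1) = ((j-i:ℕ):ℝ)^(d-1) * (j:ℝ)^(1-d) := by
        rw [Real.div_rpow (by linarith [hcast ▸ hk0]) hj0.le, div_eq_mul_inv,
          ← Real.rpow_neg hj0.le, show -(d-1) = 1-d by ring, hcast]
      rw [h1]
      exact mul_le_mul_of_nonneg_right hup (Real.rpow_nonneg hj0.le _)
  -- set up Tannery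
  set f : ℕ → ℕ → ℝ := fun j i => if i ≤ j then ψ i * (a (j - i) * (j:ℝ) ^ (1 - d)) else 0
    with hf
  have key : Tendsto (fun j => ∑' i, f j i) atTop (nhds (∑' i, ψ i)) := by
    apply tendsto_tsum_of_dominated_convergence
      (bound := fun i : ℕ => C * (|ψ i| * ((i:ℝ) + 1) ^ (1 - d)))
    · exact hψ.mul_left C
    · intro i
      have : Tendsto (fun j : ℕ => ψ i * (a (j - i) * (j:ℝ) ^ (1 - d))) atTop (nhds (ψ i)) := by
        simpa using (hpt i).const_mul (ψ i)
      refine this.congr' ?_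
      filter_upwards [eventually_ge_atTop i] with j hj
      simp [hf, hj]
    · filter_upwards [] with j
      intro i
      rcases le_or_gt i j with hij | hij
      · simp only [hf, hij, if_pos]
        rw [Real.norm_eq_abs, abs_mul, abs_of_nonneg
          (mul_nonneg (ha_pos _).le (Real.rpow_nonneg (Nat.cast_nonneg _) _))]
        have hmul : (j:ℝ) ^ (1-d) ≤ (((j-i:ℕ):ℝ) + 1) ^ (1-d) * ((i:ℝ) + 1) ^ (1-d) := by
          rw [← Real.mul_rpow (by positivity) (by positivity)]
          apply Real.rpow_le_rpow (Nat.cast_nonneg _) _ (by linarith)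
          have hn : j ≤ (j - i + 1) * (i + 1) := by
            obtain ⟨k, rfl⟩ := Nat.exists_eq_add_of_le hij
            have h5 : i + k - i = k := by omega
            rw [h5]
            have : (k+1)*(i+1) = k*i + k + i + 1 := by ring
            omega
          calc (j:ℝ) ≤ (((j - i + 1) * (i + 1) : ℕ) : ℝ) := by exact_mod_cast hn
            _ = (((j-i:ℕ):ℝ) + 1) * ((i:ℝ) + 1) := by push_cast; ring
        calc |ψ i| * (a (j-i) * (j:ℝ)^(1-d))
            ≤ |ψ i| * (a (j-i) * ((((j-i:ℕ):ℝ) + 1) ^ (1-d) * ((i:ℝ) + 1) ^ (1-d))) := by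
              apply mul_le_mul_of_nonneg_left _ (abs_nonneg _)
              exact mul_le_mul_of_nonneg_left hmul (ha_pos _).le
          _ = (a (j-i) * (((j-i:ℕ):ℝ) + 1) ^ (1-d)) * (|ψ i| * ((i:ℝ) + 1) ^ (1-d)) := by ring
          _ ≤ C * (|ψ i| * ((i:ℝ) + 1) ^ (1-d)) := by
              apply mul_le_mul_of_nonneg_right (hbd _)
              positivity
      · simp only [hf, if_neg (by omega : ¬ i ≤ j), norm_zero]
        positivity
  refine key.congr' ?_
  filter_upwards [] with j
  have hts : ∑' i, f j i = ∑ i ∈ Finset.range (j+1), f j i := by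
    apply tsum_eq_sum
    intro i hi
    simp only [Finset.mem_range, not_lt] at hi
    simp only [hf]
    exact if_neg (by omega)
  rw [hts, Finset.sum_mul, Finset.sum_mul]
  apply Finset.sum_congr rfl
  intro i hi
  simp only [Finset.mem_range] at hi
  have hij : i ≤ j := by omega
  simp only [hf, if_pos hij, ha]
  have hG2 : Real.Gamma (((j-i:ℕ):ℝ) + 1) ≠ 0 :=
    (Real.Gamma_pos_of_pos (by positivity)).ne'
  have hji : (i:ℝ) ≤ (j:ℝ) := Nat.cast_le.mpr hij
  have hG2' : Real.Gamma ((j:ℝ) - (i:ℝ) + 1) ≠ 0 :=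
    (Real.Gamma_pos_of_pos (by linarith)).ne'
  field_simp
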